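/- Let x be a θ-cyclic point with cubic support graph G_x having exactly k critical cuts, and let U be a critical cut of G_x. Then the contracted graph G_x^U has at most k − 1 critical cuts. -/

import Mathlib

open scoped Classical

noncomputable section

namespace TSPPaper

variable {V : Type*} [Fintype V] [DecidableEq V]

/-- The sum of `x` over the edges crossing the cut `U` (each crossing edge counted once). -/
def cutSum (x : Sym2 V → ℝ) (U : Finset V) : ℝ :=
  ∑ u ∈ U, ∑ v ∈ Uᶜ, x s(u, v)

/-- Membership in the subtour elimination polytope `SUBT(K_n)`. -/
def inSUBT (x : Sym2 V → ℝ) : Prop :=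
  (∀ e : Sym2 V, e.IsDiag → x e = 0) ∧
  (∀ e : Sym2 V, 0 ≤ x e) ∧ (∀ e : Sym2 V, x e ≤ 1) ∧
  (∀ v : V, cutSum x {v} = 2) ∧
  (∀ U : Finset V, U.Nonempty → U ≠ Finset.univ → 2 ≤ cutSum x U)

/-- The simple graph underlying the support of a multigraph given by edge multiplicities. -/
def supportGraph (F : Sym2 V → ℕ) : SimpleGraph V where
  Adj u v := u ≠ v ∧ 0 < F s(u, v)
  symm := ⟨fun u v h => ⟨h.1.symm, by rw [Sym2.eq_swap]; exact h.2⟩⟩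
  loopless := ⟨fun u h => h.1 rfl⟩

/-- The support graph of a real edge vector. -/
def suppGraph (x : Sym2 V → ℝ) : SimpleGraph V where
  Adj u v := u ≠ v ∧ 0 < x s(u, v)
  symm := ⟨fun u v h => ⟨h.1.symm, by rw [Sym2.eq_swap]; exact h.2⟩⟩
  loopless := ⟨fun u h => h.1 rfl⟩

/-- Degree of a vertex in a multigraph given by edge multiplicities. -/
def multiDeg (F : Sym2 V → ℕ) (v : V) : ℕ := ∑ u : V, F s(v, u)

/-- A tour: a spanning connected Eulerian multigraph (with no loops). -/
def IsTour (F : Sym2 V → ℕ) : Prop :=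
  (∀ e : Sym2 V, e.IsDiag → F e = 0) ∧
  (∀ v : V, Even (multiDeg F v)) ∧
  (supportGraph F).Connected

/-- A tour using only edges in the support of `x`. -/
def IsTourSupp (x : Sym2 V → ℝ) (F : Sym2 V → ℕ) : Prop :=
  IsTour F ∧ ∀ e : Sym2 V, F e ≠ 0 → 0 < x e

/-- A tour of a (simple) graph `G`. -/
def IsTourOfGraph (G : SimpleGraph V) (F : Sym2 V → ℕ) : Prop :=
  IsTour F ∧ ∀ e : Sym2 V, F e ≠ 0 → e ∈ G.edgeSet

/-- Membership in `TSP(K_n)`: the convex hull of incidence vectors of tours. -/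
def inTSP (y : Sym2 V → ℝ) : Prop :=
  ∃ (k : ℕ) (F : Fin k → Sym2 V → ℕ) (lam : Fin k → ℝ),
    (∀ i, IsTour (F i)) ∧ (∀ i, 0 ≤ lam i) ∧ (∑ i, lam i = 1) ∧
    (∀ e : Sym2 V, y e = ∑ i, lam i * (F i e : ℝ))

/-- number of support edges incident on a vertex -/
def suppDeg (x : Sym2 V → ℝ) (v : V) : ℕ :=
  (Finset.univ.filter fun e : Sym2 V => 0 < x e ∧ v ∈ e).card

/-- A θ-cyclic point. -/
def IsCyclic (θ : ℝ) (x : Sym2 V → ℝ) : Prop :=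
  0 < θ ∧ θ ≤ 1 / 2 ∧ inSUBT x ∧
  (∀ e : Sym2 V, x e = 0 ∨ x e = θ ∨ x e = 1 - θ ∨ x e = 1) ∧
  (∀ v : V, suppDeg x v ≤ 3) ∧
  (∀ v : V, ∃ e : Sym2 V, v ∈ e ∧ x e = 1)

/-- The edges of the complete graph crossing the cut `U`. -/
def crossEdges (U : Finset V) : Finset (Sym2 V) :=
  Finset.univ.filter fun e : Sym2 V => ∃ u v : V, e = s(u, v) ∧ u ∈ U ∧ v ∉ U

/-- The support edges of `x` crossing the cut `U`. -/
def cutEdges (x : Sym2 V → ℝ) (U : Finset V) : Finset (Sym2 V) :=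
  (crossEdges U).filter fun e => 0 < x e

/-- The edges of the graph `G` crossing the cut `U`. -/
def cutEdgesG (G : SimpleGraph V) (U : Finset V) : Finset (Sym2 V) :=
  (crossEdges U).filter fun e => e ∈ G.edgeSet

/-- A critical cut of the support graph of `x`. -/
def IsCriticalCut (x : Sym2 V → ℝ) (U : Finset V) : Prop :=
  2 ≤ U.card ∧ 2 ≤ Uᶜ.card ∧
  (cutEdges x U).card = 3 ∧
  ((cutEdges x U).filter fun e => x e = 1).card = 1 ∧
  ∀ e ∈ cutEdges x U, ∀ f ∈ cutEdges x U, e ≠ f → ∀ w : V, w ∈ e → w ∈ f → False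

/-- Vertex set after contracting the complement of `U` to a single pseudovertex `none`. -/
abbrev Contracted (U : Finset V) := Option {u : V // u ∈ U}

/-- The contraction map sending every vertex outside of `U` to the pseudovertex. -/
def contractMap (U : Finset V) (w : V) : Contracted U :=
  if h : w ∈ U then some ⟨w, h⟩ else none

/-- The point induced on the contracted vertex set (loops are removed). -/
def contractPoint (x : Sym2 V → ℝ) (U : Finset V) : Sym2 (Contracted U) → ℝ :=
  fun d => if d.IsDiag then 0
    else ∑ e ∈ Finset.univ.filter (fun e : Sym2 V => Sym2.map (contractMap U) e = d), x e

/-- The eight allowed patterns, as multiplicity triples on `(e_u, f_u, g_u)`. -/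
def patternOK (a b c : ℕ) : Prop :=
  (a, b, c) = (2, 0, 0) ∨ (a, b, c) = (1, 1, 0) ∨ (a, b, c) = (1, 0, 1) ∨
  (a, b, c) = (2, 2, 0) ∨ (a, b, c) = (2, 0, 2) ∨ (a, b, c) = (2, 1, 1) ∨
  (a, b, c) = (1, 2, 1) ∨ (a, b, c) = (1, 1, 2)

/-- A handpicked tour (of the support of a cyclic point `x`): around every vertex `u` the
multiset of edges of the tour incident on `u` is one of the allowed patterns on the
1-edge and the two fractional edges at `u`. -/
def Handpicked (x : Sym2 V → ℝ) (F : Sym2 V → ℕ) : Prop :=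
  ∀ u : V, ∃ e f g : Sym2 V,
    u ∈ e ∧ u ∈ f ∧ u ∈ g ∧ e ≠ f ∧ e ≠ g ∧ f ≠ g ∧
    x e = 1 ∧ 0 < x f ∧ x f < 1 ∧ 0 < x g ∧ x g < 1 ∧
    (∀ e' : Sym2 V, 0 < x e' → u ∈ e' → e' = e ∨ e' = f ∨ e' = g) ∧
    patternOK (F e) (F f) (F g)

/-- `φ₂(e)`: total weight of the members of the combination in which `e` is doubled. -/
def phi2 {k : ℕ} (lam : Fin k → ℝ) (F : Fin k → Sym2 V → ℕ) (e : Sym2 V) : ℝ :=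
  ∑ i ∈ Finset.univ.filter (fun i : Fin k => F i e = 2), lam i

/-- Frequency of the pattern whose multiplicities on the edges `(e, f, g)` are given by `p`. -/
def patFreq {k : ℕ} (lam : Fin k → ℝ) (F : Fin k → Sym2 V → ℕ)
    (e f g : Sym2 V) (p : ℕ × ℕ × ℕ) : ℝ :=
  ∑ i ∈ Finset.univ.filter (fun i : Fin k => (F i e, F i f, F i g) = p), lam i

/-- The simple graph given by a finite set of edges. -/
def graphOfEdges (T : Finset (Sym2 V)) : SimpleGraph V where
  Adj u v := u ≠ v ∧ s(u, v) ∈ T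
  symm := ⟨fun u v h => ⟨h.1.symm, by rw [Sym2.eq_swap]; exact h.2⟩⟩
  loopless := ⟨fun u h => h.1 rfl⟩

/-- Degree of a vertex in an edge set. -/
def edgeDeg (T : Finset (Sym2 V)) (v : V) : ℕ := (T.filter fun e => v ∈ e).card

/-- A connector of the support graph of `x`: a connected spanning subgraph, no doubled edges. -/
def IsConnector (x : Sym2 V → ℝ) (T : Finset (Sym2 V)) : Prop :=
  (∀ e ∈ T, 0 < x e) ∧ (graphOfEdges T).Connected

/-- `M` is an induced matching of the support graph of `x` consisting of 1-edges. -/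
def IsInducedMatching (x : Sym2 V → ℝ) (M : Finset (Sym2 V)) : Prop :=
  (∀ e ∈ M, x e = 1) ∧
  (∀ e ∈ M, ∀ f ∈ M, e ≠ f → ∀ w : V, w ∈ e → w ∈ f → False) ∧
  (∀ e : Sym2 V, 0 < x e → (∀ w : V, w ∈ e → ∃ f ∈ M, w ∈ f) → e ∈ M)

/-- Property `P(v, M, Λ)` for a convex combination `{lam, T}` of connectors. -/
def PropertyP (x : Sym2 V → ℝ) (v : V) (M : Finset (Sym2 V)) (L : ℝ)
    {k : ℕ} (lam : Fin k → ℝ) (T : Fin k → Finset (Sym2 V)) : Prop :=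
  (∑ i ∈ Finset.univ.filter (fun i : Fin k => edgeDeg (T i) v = 1), lam i) = L ∧
  (∑ i ∈ Finset.univ.filter (fun i : Fin k => edgeDeg (T i) v = 3), lam i) = L ∧
  (∑ i ∈ Finset.univ.filter (fun i : Fin k => edgeDeg (T i) v = 2), lam i) = 1 - 2 * L ∧
  (∀ e ∈ M, ∀ w : V, w ∈ e → ∀ i, edgeDeg (T i) w = 2) ∧
  (∀ i, ((graphOfEdges (T i)).induce {u : V | u ≠ v}).Connected)

/-- An `O`-join of the support graph of `x`. -/
def IsOJoin (x : Sym2 V → ℝ) (O : Finset V) (J : Finset (Sym2 V)) : Prop :=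
  (∀ e ∈ J, 0 < x e) ∧ ∀ v : V, (Odd (edgeDeg J v) ↔ v ∈ O)

/-- An `O`-join of the graph `G`. -/
def IsOJoinOfGraph (G : SimpleGraph V) (O : Finset V) (J : Finset (Sym2 V)) : Prop :=
  (∀ e ∈ J, e ∈ G.edgeSet) ∧ ∀ v : V, (Odd (edgeDeg J v) ↔ v ∈ O)

/-- The support graph, after contracting the complement of `U`, of a multigraph on `V`
whose edges all have an endpoint in `U`. -/
def quotGraph (U : Finset V) (F : Sym2 V → ℕ) : SimpleGraph (Contracted U) where
  Adj a b := a ≠ b ∧ ∃ u v : V, 0 < F s(u, v) ∧ contractMap U u = a ∧ contractMap U v = b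
  symm := ⟨fun a b h => ⟨h.1.symm, by
    obtain ⟨u, v, h1, h2, h3⟩ := h.2
    exact ⟨v, u, by rw [Sym2.eq_swap]; exact h1, h3, h2⟩⟩⟩
  loopless := ⟨fun a h => h.1 rfl⟩

/-- A tour of the graph `G^U` obtained from `G` by contracting the complement of `U`,
encoded by the multiplicities of the surviving edges of `G` (those with an endpoint in `U`). -/
def IsTourOfContraction (G : SimpleGraph V) (U : Finset V) (F : Sym2 V → ℕ) : Prop :=
  (∀ e : Sym2 V, F e ≠ 0 → e ∈ G.edgeSet ∧ ∃ w, w ∈ e ∧ w ∈ U) ∧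
  (∀ u ∈ U, Even (multiDeg F u)) ∧
  Even (∑ u ∈ U, ∑ w ∈ Uᶜ, F s(u, w)) ∧
  (quotGraph U F).Connected

/-- The number of critical cuts of the support graph of `x`. -/
def criticalCutCount (x : Sym2 V → ℝ) : ℕ :=
  Set.ncard {U : Finset V | IsCriticalCut x U}

section Aux

variable {U : Finset V}

lemma contractMap_eq_none_iff {w : V} : contractMap U w = none ↔ w ∉ U := by
  unfold contractMap
  split <;> simp_all

lemma contractMap_eq_some_iff {w : V} {a : {u : V // u ∈ U}} :
    contractMap U w = some a ↔ w = (a : V) := by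
  unfold contractMap
  split
  · next h => simp [Subtype.ext_iff, eq_comm]
  · next h =>
      simp only [reduceCtorEq, false_iff]
      rintro rfl
      exact h a.2

/-- The lift of a cut of the contracted graph back to `V`. -/
def liftCut (U : Finset V) (W : Finset (Contracted U)) : Finset V :=
  Finset.univ.filter fun v => contractMap U v ∈ W

lemma mem_liftCut {W : Finset (Contracted U)} {v : V} :
    v ∈ liftCut U W ↔ contractMap U v ∈ W := by simp [liftCut]

/-- A section of the contraction map. -/
def secMap (U : Finset V) (w0 : V) : Contracted U → V := fun a => a.elim w0 Subtype.val

lemma contractMap_secMap {w0 : V} (hw0 : w0 ∉ U) (a : Contracted U) :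
    contractMap U (secMap U w0 a) = a := by
  cases a with
  | none => exact contractMap_eq_none_iff.mpr hw0
  | some a => exact contractMap_eq_some_iff.mpr rfl

lemma card_le_liftCut {W : Finset (Contracted U)} (hUc : Uᶜ.Nonempty) :
    W.card ≤ (liftCut U W).card := by
  obtain ⟨w0, hw0⟩ := hUc
  rw [Finset.mem_compl] at hw0
  apply Finset.card_le_card_of_injOn (secMap U w0)
  · intro a ha
    rw [Finset.mem_coe, mem_liftCut, contractMap_secMap hw0]
    exact ha
  · intro a _ b _ h
    have := congrArg (contractMap U) h
    rwa [contractMap_secMap hw0, contractMap_secMap hw0] at this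

lemma compl_liftCut (W : Finset (Contracted U)) : (liftCut U W)ᶜ = liftCut U Wᶜ := by
  ext v
  simp [mem_liftCut, Finset.mem_compl]

lemma mem_cutEdges {x : Sym2 V → ℝ} {S : Finset V} {e : Sym2 V} :
    e ∈ cutEdges x S ↔ (∃ u v : V, e = s(u, v) ∧ u ∈ S ∧ v ∉ S) ∧ 0 < x e := by
  simp [cutEdges, crossEdges]

lemma cross_of_map {x : Sym2 V → ℝ} {W : Finset (Contracted U)} {e : Sym2 V}
    {a b : Contracted U} (h : Sym2.map (contractMap U) e = s(a, b))
    (ha : a ∈ W) (hb : b ∉ W) (hxe : 0 < x e) : e ∈ cutEdges x (liftCut U W) := by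
  induction e using Sym2.ind with
  | _ u v =>
    rw [Sym2.map_pair_eq, Sym2.eq_iff] at h
    refine mem_cutEdges.mpr ⟨?_, hxe⟩
    rcases h with ⟨h1, h2⟩ | ⟨h1, h2⟩
    · exact ⟨u, v, rfl, mem_liftCut.mpr (by rw [h1]; exact ha),
        fun hv => hb (by rw [← h2]; exact mem_liftCut.mp hv)⟩
    · exact ⟨v, u, Sym2.eq_swap.symm, mem_liftCut.mpr (by rw [h2]; exact ha),
        fun hv => hb (by rw [← h1]; exact mem_liftCut.mp hv)⟩

lemma map_mem_cutEdges {x : Sym2 V → ℝ} (hx0 : ∀ e, 0 ≤ x e) {W : Finset (Contracted U)}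
    {e : Sym2 V} (he : e ∈ cutEdges x (liftCut U W)) :
    Sym2.map (contractMap U) e ∈ cutEdges (contractPoint x U) W := by
  obtain ⟨⟨u, v, rfl, hu, hv⟩, hpos⟩ := mem_cutEdges.mp he
  rw [mem_liftCut] at hu hv
  rw [Sym2.map_pair_eq]
  have hne : contractMap U u ≠ contractMap U v := fun h => hv (h ▸ hu)
  refine mem_cutEdges.mpr ⟨⟨_, _, rfl, hu, hv⟩, ?_⟩
  rw [contractPoint, if_neg (by simpa using hne)]
  refine Finset.sum_pos' (fun e _ => hx0 e) ⟨s(u, v), ?_, hpos⟩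
  simp [Sym2.map_pair_eq]

lemma contractMap_inj_left {p p' : V} (hp : p ∈ U)
    (h : contractMap U p = contractMap U p') : p = p' := by
  have h1 : contractMap U p = some ⟨p, hp⟩ := contractMap_eq_some_iff.mpr rfl
  rw [h] at h1
  exact (contractMap_eq_some_iff.mp h1).symm

lemma eq_of_share {x : Sym2 V → ℝ} (hU : IsCriticalCut x U) {e f : Sym2 V}
    (he : e ∈ cutEdges x U) (hf : f ∈ cutEdges x U) {w : V} (hwe : w ∈ e) (hwf : w ∈ f) :
    e = f := by
  by_contra hne
  exact hU.2.2.2.2 e he f hf hne w hwe hwf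

lemma map_cutEdges_inj {x : Sym2 V → ℝ} (hU : IsCriticalCut x U) {W : Finset (Contracted U)}
    {e f : Sym2 V} (he : e ∈ cutEdges x (liftCut U W)) (hf : f ∈ cutEdges x (liftCut U W))
    (hef : Sym2.map (contractMap U) e = Sym2.map (contractMap U) f) : e = f := by
  obtain ⟨⟨u, v, rfl, hu, hv⟩, hpos⟩ := mem_cutEdges.mp he
  obtain ⟨⟨u', v', rfl, hu', hv'⟩, hpos'⟩ := mem_cutEdges.mp hf
  rw [mem_liftCut] at hu hv hu' hv'
  rw [Sym2.map_pair_eq, Sym2.map_pair_eq, Sym2.eq_iff] at hef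
  rcases hef with ⟨h1, h2⟩ | ⟨h1, h2⟩
  · -- aligned case
    by_cases huU : u ∈ U
    · have huu : u = u' := contractMap_inj_left huU h1
      by_cases hvU : v ∈ U
      · have hvv : v = v' := contractMap_inj_left hvU h2
        rw [huu, hvv]
      · have hvn : contractMap U v = none := contractMap_eq_none_iff.mpr hvU
        have hv'U : v' ∉ U := contractMap_eq_none_iff.mp (by rw [← h2]; exact hvn)
        subst huu
        exact eq_of_share hU
          (mem_cutEdges.mpr ⟨⟨u, v, rfl, huU, hvU⟩, hpos⟩)
          (mem_cutEdges.mpr ⟨⟨u, v', rfl, huU, hv'U⟩, hpos'⟩)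
          (Sym2.mem_mk_left u v) (Sym2.mem_mk_left u v')
    · have hun : contractMap U u = none := contractMap_eq_none_iff.mpr huU
      have hu'U : u' ∉ U := contractMap_eq_none_iff.mp (by rw [← h1]; exact hun)
      have hvU : v ∈ U := by
        by_contra hvU
        exact hv (by rw [contractMap_eq_none_iff.mpr hvU, ← hun]; exact hu)
      have hvv : v = v' := contractMap_inj_left hvU h2
      subst hvv
      exact eq_of_share hU
        (mem_cutEdges.mpr ⟨⟨v, u, Sym2.eq_swap.symm, hvU, huU⟩, hpos⟩)
        (mem_cutEdges.mpr ⟨⟨v, u', Sym2.eq_swap.symm, hvU, hu'U⟩, hpos'⟩)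
        (Sym2.mem_mk_right u v) (Sym2.mem_mk_right u' v)
  · -- swapped case: contradiction
    exact absurd (by rw [← h1]; exact hu) hv'

lemma map_cutEdges_surj {x : Sym2 V → ℝ} (hx0 : ∀ e, 0 ≤ x e) {W : Finset (Contracted U)}
    {d : Sym2 (Contracted U)} (hd : d ∈ cutEdges (contractPoint x U) W) :
    ∃ e ∈ cutEdges x (liftCut U W), Sym2.map (contractMap U) e = d := by
  obtain ⟨⟨a, b, rfl, ha, hb⟩, hpos⟩ := mem_cutEdges.mp hd
  have hdn : ¬(s(a, b)).IsDiag := by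
    intro h
    rw [contractPoint, if_pos h] at hpos
    exact lt_irrefl 0 hpos
  rw [contractPoint, if_neg hdn] at hpos
  obtain ⟨e, hefib, hxe⟩ :
      ∃ e ∈ Finset.univ.filter (fun e : Sym2 V => Sym2.map (contractMap U) e = s(a, b)),
        0 < x e := by
    by_contra hc
    push_neg at hc
    have hnp : ∑ e ∈ Finset.univ.filter
        (fun e : Sym2 V => Sym2.map (contractMap U) e = s(a, b)), x e ≤ 0 :=
      Finset.sum_nonpos fun e he => hc e he
    linarith
  rw [Finset.mem_filter] at hefib
  exact ⟨e, cross_of_map hefib.2 ha hb hxe, hefib.2⟩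

lemma contractPoint_map {x : Sym2 V → ℝ} (hx0 : ∀ e, 0 ≤ x e) (hU : IsCriticalCut x U)
    {W : Finset (Contracted U)} {e : Sym2 V} (he : e ∈ cutEdges x (liftCut U W)) :
    contractPoint x U (Sym2.map (contractMap U) e) = x e := by
  have hm := map_mem_cutEdges hx0 he
  obtain ⟨⟨a, b, hab, ha, hb⟩, hpos⟩ := mem_cutEdges.mp hm
  have hdn : ¬(Sym2.map (contractMap U) e).IsDiag := by
    rw [hab]
    simp only [Sym2.mk_isDiag_iff]
    exact fun h => hb (h ▸ ha)
  rw [contractPoint, if_neg hdn]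
  refine Finset.sum_eq_single_of_mem e (by simp) ?_
  intro g hg hge
  rw [Finset.mem_filter] at hg
  by_contra hg0
  have hgx : 0 < x g := lt_of_le_of_ne (hx0 g) (Ne.symm hg0)
  have hgc : g ∈ cutEdges x (liftCut U W) := cross_of_map (by rw [hg.2, hab]) ha hb hgx
  exact hge (map_cutEdges_inj hU hgc he hg.2)

lemma liftCut_critical {x : Sym2 V → ℝ} (hx0 : ∀ e, 0 ≤ x e) (hU : IsCriticalCut x U)
    {W : Finset (Contracted U)} (hW : IsCriticalCut (contractPoint x U) W) :
    IsCriticalCut x (liftCut U W) := by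
  have hUc : Uᶜ.Nonempty := Finset.card_pos.mp (by have := hU.2.1; omega)
  obtain ⟨hW2, hWc2, hW3, hW1, hWd⟩ := hW
  refine ⟨le_trans hW2 (card_le_liftCut hUc), ?_, ?_, ?_, ?_⟩
  · rw [compl_liftCut]
    exact le_trans hWc2 (card_le_liftCut hUc)
  · rw [← hW3]
    exact Finset.card_bij (fun e _ => Sym2.map (contractMap U) e)
      (fun e he => map_mem_cutEdges hx0 he)
      (fun e he f hf h => map_cutEdges_inj hU he hf h)
      (fun d hd => by
        obtain ⟨e, he, hde⟩ := map_cutEdges_surj hx0 hd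
        exact ⟨e, he, hde⟩)
  · rw [← hW1]
    refine Finset.card_bij (fun e _ => Sym2.map (contractMap U) e) ?_ ?_ ?_
    · intro e he
      rw [Finset.mem_filter] at he ⊢
      exact ⟨map_mem_cutEdges hx0 he.1, by rw [contractPoint_map hx0 hU he.1]; exact he.2⟩
    · intro e he f hf h
      exact map_cutEdges_inj hU (Finset.mem_filter.mp he).1 (Finset.mem_filter.mp hf).1 h
    · intro d hd
      rw [Finset.mem_filter] at hd
      obtain ⟨e, he, hde⟩ := map_cutEdges_surj hx0 hd.1
      refine ⟨e, Finset.mem_filter.mpr ⟨he, ?_⟩, hde⟩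
      rw [← contractPoint_map hx0 hU he, hde]
      exact hd.2
  · intro e he f hf hef w hwe hwf
    have h1 := map_mem_cutEdges hx0 he
    have h2 := map_mem_cutEdges hx0 hf
    have hne : Sym2.map (contractMap U) e ≠ Sym2.map (contractMap U) f :=
      fun h => hef (map_cutEdges_inj hU he hf h)
    exact hWd _ h1 _ h2 hne (contractMap U w)
      (Sym2.mem_map.mpr ⟨w, hwe, rfl⟩) (Sym2.mem_map.mpr ⟨w, hwf, rfl⟩)

lemma liftCut_ne {W : Finset (Contracted U)} (hWc : 2 ≤ Wᶜ.card) (hUc : Uᶜ.Nonempty) :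
    liftCut U W ≠ U := by
  intro h
  have hsub : Wᶜ ⊆ {none} := by
    intro a ha
    rw [Finset.mem_compl] at ha
    rw [Finset.mem_singleton]
    cases a with
    | none => rfl
    | some a =>
      exfalso
      apply ha
      have hmem : (a : V) ∈ liftCut U W := by rw [h]; exact a.2
      rw [mem_liftCut, contractMap_eq_some_iff.mpr rfl] at hmem
      exact hmem
  have := Finset.card_le_card hsub
  simp only [Finset.card_singleton] at this
  omega

lemma liftCut_injective (hUc : Uᶜ.Nonempty) :
    Function.Injective (liftCut U) := by
  obtain ⟨w0, hw0⟩ := hUc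
  rw [Finset.mem_compl] at hw0
  intro W W' h
  ext a
  have hiff : secMap U w0 a ∈ liftCut U W ↔ secMap U w0 a ∈ liftCut U W' := by rw [h]
  simp only [mem_liftCut, contractMap_secMap hw0] at hiff
  exact hiff

end Aux

/-- Observation `obs:inductivecriticalcut`. If `G_x` has exactly `k` critical
cuts and `U` is one of them, then `G_x^U` has at most `k − 1` critical cuts. -/
theorem statement11 (n : ℕ) (hn : 3 ≤ n) (θ : ℝ) (x : Sym2 (Fin n) → ℝ)
    (hx : IsCyclic θ x) (hcubic : ∀ v : Fin n, suppDeg x v = 3)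
    (k : ℕ) (hk : criticalCutCount x = k)
    (U : Finset (Fin n)) (hcrit : IsCriticalCut x U) :
    criticalCutCount (contractPoint x U) ≤ k - 1 := by
  subst hk
  have hx0 : ∀ e, 0 ≤ x e := hx.2.2.1.2.1
  have hUc : Uᶜ.Nonempty := Finset.card_pos.mp (by have := hcrit.2.1; omega)
  have hmem : U ∈ {S : Finset (Fin n) | IsCriticalCut x S} := hcrit
  have hsub : ∀ W ∈ {W : Finset (Contracted U) | IsCriticalCut (contractPoint x U) W},
      liftCut U W ∈ {S : Finset (Fin n) | IsCriticalCut x S} \ {U} := by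
    intro W hW
    exact ⟨liftCut_critical hx0 hcrit hW, liftCut_ne hW.2.1 hUc⟩
  have hle : criticalCutCount (contractPoint x U) ≤
      ({S : Finset (Fin n) | IsCriticalCut x S} \ {U}).ncard :=
    Set.ncard_le_ncard_of_injOn (liftCut U) hsub
      ((liftCut_injective hUc).injOn) (Set.toFinite _)
  rwa [Set.ncard_diff_singleton_of_mem hmem] at hle

end TSPPaper
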